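/- For every real number x with 0 < x < 1/2, the derivatives at s = −1 of the Hurwitz zeta function satisfy ζ'(−1, x) = (1/2) · ζ'(−1, 2x) − (1/4) · (4x² − 2x + 1/6) · log 2 − ζ'(−1, x + 1/2). -/

import Mathlib

open HurwitzZeta
open Complex Set Filter Topology
set_option maxHeartbeats 1000000 in

lemma my_dup (x : ℝ) (hx0 : 0 < x) (hx : x < 1/2) :
    Set.EqOn
      (fun s => hurwitzZeta (x : UnitAddCircle) s + hurwitzZeta ((x + 1/2 : ℝ) : UnitAddCircle) s)
      (fun s => (2:ℂ) ^ s * hurwitzZeta ((2 * x : ℝ) : UnitAddCircle) s) {(1:ℂ)}ᶜ := by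
  have hUo : IsOpen ({(1:ℂ)}ᶜ) := isOpen_compl_singleton
  have hf : AnalyticOnNhd ℂ
      (fun s => hurwitzZeta (x : UnitAddCircle) s + hurwitzZeta ((x + 1/2 : ℝ) : UnitAddCircle) s)
      {(1:ℂ)}ᶜ := by
    refine DifferentiableOn.analyticOnNhd (fun u hu => ?_) hUo
    exact (((differentiableAt_hurwitzZeta _ hu).add
      (differentiableAt_hurwitzZeta _ hu))).differentiableWithinAt
  have hg : AnalyticOnNhd ℂ
      (fun s => (2:ℂ) ^ s * hurwitzZeta ((2 * x : ℝ) : UnitAddCircle) s) {(1:ℂ)}ᶜ := by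
    refine DifferentiableOn.analyticOnNhd (fun u hu => ?_) hUo
    exact ((differentiableAt_id.const_cpow (Or.inl two_ne_zero)).mul
      (differentiableAt_hurwitzZeta _ hu)).differentiableWithinAt
  have hconn : IsPreconnected ({(1:ℂ)}ᶜ) :=
    (isConnected_compl_singleton_of_one_lt_rank (rank_real_complex ▸ Nat.one_lt_ofNat)
      _).isPreconnected
  refine hf.eqOn_of_preconnected_of_eventuallyEq hg hconn (z₀ := 2) (by norm_num) ?_
  have hmem : {s : ℂ | 1 < s.re} ∈ 𝓝 (2:ℂ) :=
    (isOpen_lt continuous_const continuous_re).mem_nhds (by norm_num)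
  filter_upwards [hmem] with s hs
  have h2s : (2:ℂ) ^ s ≠ 0 := by simp [cpow_eq_zero_iff]
  have h2x : HasSum (fun n : ℕ => 1 / ((n:ℂ) + ((2*x : ℝ):ℂ)) ^ s)
      (hurwitzZeta ((2 * x : ℝ) : UnitAddCircle) s) :=
    hasSum_hurwitzZeta_of_one_lt_re ⟨by linarith, by linarith⟩ hs
  have hmul := h2x.mul_left ((2:ℂ) ^ s)
  have key : ∀ (a : ℝ), 0 ≤ a → ∀ k : ℕ,
      (2:ℂ) ^ s * (1 / (((2*((k:ℝ)+a) : ℝ):ℂ)) ^ s) = 1 / ((k:ℂ) + (a:ℂ)) ^ s := by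
    intro a ha k
    rw [show ((2*((k:ℝ)+a) : ℝ):ℂ) = ((2:ℝ):ℂ) * (((k:ℝ)+a : ℝ):ℂ) by push_cast; ring,
      mul_cpow_ofReal_nonneg (by norm_num) (by positivity)]
    push_cast
    rw [mul_one_div, mul_comm ((2:ℂ)^s), ← div_div, div_div_cancel_left' h2s, one_div]
  have he : HasSum
      (fun k : ℕ => (2:ℂ) ^ s * (1 / (((2*k : ℕ):ℂ) + ((2*x : ℝ):ℂ)) ^ s))
      (hurwitzZeta (x : UnitAddCircle) s) := by
    have h1 : HasSum (fun n : ℕ => 1 / ((n:ℂ) + ((x:ℝ):ℂ)) ^ s)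
        (hurwitzZeta (x : UnitAddCircle) s) :=
      hasSum_hurwitzZeta_of_one_lt_re ⟨by linarith, by linarith⟩ hs
    have : (fun k : ℕ => (2:ℂ) ^ s * (1 / (((2*k : ℕ):ℂ) + ((2*x : ℝ):ℂ)) ^ s))
        = fun n : ℕ => 1 / ((n:ℂ) + ((x:ℝ):ℂ)) ^ s := by
      funext k
      rw [show (((2*k : ℕ):ℂ) + ((2*x : ℝ):ℂ)) = ((2*((k:ℝ)+x) : ℝ):ℂ) by push_cast; ring,
        key x hx0.le k]
    rw [this]
    exact h1
  have ho : HasSum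
      (fun k : ℕ => (2:ℂ) ^ s * (1 / (((2*k+1 : ℕ):ℂ) + ((2*x : ℝ):ℂ)) ^ s))
      (hurwitzZeta ((x + 1/2 : ℝ) : UnitAddCircle) s) := by
    have h1 : HasSum (fun n : ℕ => 1 / ((n:ℂ) + ((x + 1/2 : ℝ):ℂ)) ^ s)
        (hurwitzZeta ((x + 1/2 : ℝ) : UnitAddCircle) s) :=
      hasSum_hurwitzZeta_of_one_lt_re ⟨by linarith, by linarith⟩ hs
    have : (fun k : ℕ => (2:ℂ) ^ s * (1 / (((2*k+1 : ℕ):ℂ) + ((2*x : ℝ):ℂ)) ^ s))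
        = fun n : ℕ => 1 / ((n:ℂ) + ((x + 1/2 : ℝ):ℂ)) ^ s := by
      funext k
      rw [show (((2*k+1 : ℕ):ℂ) + ((2*x : ℝ):ℂ)) = ((2*((k:ℝ)+(x+1/2)) : ℝ):ℂ) by
          push_cast; ring,
        key (x + 1/2) (by linarith) k]
    rw [this]
    exact h1
  have hsum := HasSum.even_add_odd
    (f := fun n : ℕ => (2:ℂ) ^ s * (1 / ((n:ℂ) + ((2*x : ℝ):ℂ)) ^ s)) he ho
  exact hsum.unique hmul

theorem hurwitzZeta_deriv_neg_one_duplication (x : ℝ) (hx0 : 0 < x) (hx : x < 1/2) :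
    deriv (fun s => hurwitzZeta (x : UnitAddCircle) s) (-1) =
      (1/2 : ℂ) * deriv (fun s => hurwitzZeta ((2 * x : ℝ) : UnitAddCircle) s) (-1)
        - (1/4 : ℂ) * (4 * (x : ℂ) ^ 2 - 2 * (x : ℂ) + 1/6) * (Real.log 2 : ℂ)
        - deriv (fun s => hurwitzZeta ((x + 1/2 : ℝ) : UnitAddCircle) s) (-1) := by
  have hne : (-1 : ℂ) ≠ 1 := by norm_num
  have hnh : {(1:ℂ)}ᶜ ∈ 𝓝 (-1:ℂ) := isOpen_compl_singleton.mem_nhds hne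
  have hev : (fun s => hurwitzZeta (x : UnitAddCircle) s
        + hurwitzZeta ((x + 1/2 : ℝ) : UnitAddCircle) s)
      =ᶠ[𝓝 (-1:ℂ)] (fun s => (2:ℂ) ^ s * hurwitzZeta ((2 * x : ℝ) : UnitAddCircle) s) :=
    eventuallyEq_of_mem hnh (my_dup x hx0 hx)
  have hd := hev.deriv_eq
  have hdx : DifferentiableAt ℂ (fun s => hurwitzZeta (x : UnitAddCircle) s) (-1) :=
    differentiableAt_hurwitzZeta _ hne
  have hdx2 : DifferentiableAt ℂ (fun s => hurwitzZeta ((x + 1/2 : ℝ) : UnitAddCircle) s) (-1) :=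
    differentiableAt_hurwitzZeta _ hne
  have hd2x : DifferentiableAt ℂ (fun s => hurwitzZeta ((2 * x : ℝ) : UnitAddCircle) s) (-1) :=
    differentiableAt_hurwitzZeta _ hne
  rw [deriv_fun_add hdx hdx2] at hd
  -- derivative of the right-hand side
  have hR : HasDerivAt (fun s => (2:ℂ) ^ s * hurwitzZeta ((2 * x : ℝ) : UnitAddCircle) s)
      ((2:ℂ) ^ (-1:ℂ) * Complex.log 2 * hurwitzZeta ((2 * x : ℝ) : UnitAddCircle) (-1)
        + (2:ℂ) ^ (-1:ℂ) * deriv (fun s => hurwitzZeta ((2 * x : ℝ) : UnitAddCircle) s) (-1))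
      (-1) :=
    ((hasStrictDerivAt_const_cpow (Or.inl two_ne_zero)).hasDerivAt).mul hd2x.hasDerivAt
  rw [hR.deriv] at hd
  -- value at -1
  have hval : hurwitzZeta ((2 * x : ℝ) : UnitAddCircle) (-1)
      = -1/2 * (4 * (x:ℂ)^2 - 2 * (x:ℂ) + 1/6) := by
    have := hurwitzZeta_neg_nat (k := 1) one_ne_zero
      (x := (2*x : ℝ)) ⟨by linarith, by linarith⟩
    rw [show ((-(1:ℕ) : ℂ)) = (-1 : ℂ) by norm_num] at this
    rw [this]
    simp [Polynomial.bernoulli, Finset.sum_range_succ, bernoulli_one, bernoulli, bernoulli'_two]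
    ring
  have hlog : Complex.log 2 = (Real.log 2 : ℂ) := by
    rw [show (2:ℂ) = ((2:ℝ):ℂ) by norm_num, Complex.ofReal_log (by norm_num)]
  have h2inv : (2:ℂ) ^ (-1:ℂ) = 1/2 := by
    rw [cpow_neg_one]; norm_num
  rw [hval, hlog, h2inv] at hd
  linear_combination hd
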